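/- arXiv:2202.04710 — 4 statements merged into one kernel-verified Lean document; each statement's English description precedes it below -/
import Mathlib

section
/- Let H be a finite-dimensional complex inner product space, let A and B be finite-dimensional complex inner product spaces, and let V : A ⊗[ℂ] B → H be a linear isometry (injective and inner-product preserving), with P = V ∘ V† the orthogonal projection onto the code subspace C = range V. Let (e_i)_{i∈I} be an orthonormal basis of C. Then for a linear operator E : H → H the following are equivalent: (1) there exists a linear map g : B → B such that P ∘ E ∘ P = V ∘ (id_A ⊗ g) ∘ V†; (2) for every linear map L : A → A and all indices i, j one has ⟪e_i, (L̄ ∘ E − E ∘ L̄) e_j⟫ = 0, where L̄ = V ∘ (L ⊗ id_B) ∘ V† is the logical operator on H induced by L. -/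
open TensorProduct

lemma aux_commutant {A B : Type*} [AddCommGroup A] [Module ℂ A] [AddCommGroup B] [Module ℂ B]
    [FiniteDimensional ℂ A]
    (M : A ⊗[ℂ] B →ₗ[ℂ] A ⊗[ℂ] B)
    (hcomm : ∀ L : A →ₗ[ℂ] A, ∀ x,
      TensorProduct.map L LinearMap.id (M x) = M (TensorProduct.map L LinearMap.id x)) :
    ∃ g : B →ₗ[ℂ] B, ∀ x, M x = TensorProduct.map LinearMap.id g x := by
  classical
  set b := Module.finBasis ℂ A with hb
  set π : Fin (Module.finrank ℂ A) → (A ⊗[ℂ] B →ₗ[ℂ] B) := fun i =>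
    (TensorProduct.lid ℂ B).toLinearMap ∘ₗ TensorProduct.map (b.coord i) LinearMap.id with hπ
  set ψ : Fin (Module.finrank ℂ A) → (B →ₗ[ℂ] A ⊗[ℂ] B) := fun i =>
    TensorProduct.mk ℂ A B (b i) with hψ
  have hπψ : ∀ i j s, π i (ψ j s) = if i = j then s else 0 := by
    intro i j s
    simp [hπ, hψ, Module.Basis.coord_apply, Module.Basis.repr_self, Finsupp.single_apply, ite_smul, eq_comm]
  have hrec : ∀ x : A ⊗[ℂ] B, ∑ i, ψ i (π i x) = x := by
    intro x
    induction x using TensorProduct.induction_on with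
    | zero => simp
    | tmul a t =>
      simp only [hπ, hψ, LinearMap.comp_apply, map_tmul, LinearMap.id_apply,
        LinearEquiv.coe_toLinearMap, lid_tmul, Module.Basis.coord_apply, mk_apply]
      calc ∑ x : Fin (Module.finrank ℂ A), b x ⊗ₜ[ℂ] ((b.repr a) x • t)
          = ∑ x : Fin (Module.finrank ℂ A), ((b.repr a) x • b x) ⊗ₜ[ℂ] t := by
            simp [tmul_smul, smul_tmul']
        _ = (∑ x : Fin (Module.finrank ℂ A), (b.repr a) x • b x) ⊗ₜ[ℂ] t := by
            rw [sum_tmul]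
        _ = a ⊗ₜ[ℂ] t := by rw [Module.Basis.sum_repr]
    | add x y hx hy => simp [map_add, Finset.sum_add_distrib, hx, hy]
  set Em : Fin (Module.finrank ℂ A) → Fin (Module.finrank ℂ A) → (A →ₗ[ℂ] A) := fun k l =>
    LinearMap.toSpanSingleton ℂ A (b k) ∘ₗ b.coord l with hEm
  rcases isEmpty_or_nonempty (Fin (Module.finrank ℂ A)) with hemp | hne
  · refine ⟨0, fun x => ?_⟩
    have hx : x = 0 := by
      have := hrec x
      rwa [Finset.univ_eq_empty, Finset.sum_empty, eq_comm] at this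
    rw [hx]; simp
  · obtain ⟨i0⟩ := hne
    refine ⟨π i0 ∘ₗ M ∘ₗ ψ i0, ?_⟩
    set g : B →ₗ[ℂ] B := π i0 ∘ₗ M ∘ₗ ψ i0 with hg
    have hπE : ∀ i (x : A ⊗[ℂ] B),
        π i0 (TensorProduct.map (Em i0 i) LinearMap.id x) = π i x := by
      intro i x
      induction x using TensorProduct.induction_on with
      | zero => simp
      | tmul a t =>
        simp [hπ, hEm, Module.Basis.coord_apply, Module.Basis.repr_self, LinearMap.toSpanSingleton_apply]
      | add x y hx hy => simp [map_add, hx, hy]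
    have hψE : ∀ i j (t : B),
        TensorProduct.map (Em i0 i) LinearMap.id (ψ j t)
          = if j = i then ψ i0 t else 0 := by
      intro i j t
      simp only [hψ, hEm, mk_apply, map_tmul, LinearMap.id_apply, LinearMap.comp_apply,
        LinearMap.toSpanSingleton_apply, Module.Basis.coord_apply, Module.Basis.repr_self,
        Finsupp.single_apply]
      split <;> simp [*]
    have claim : ∀ j t, M (ψ j t) = ψ j (g t) := by
      intro j t
      have h1 : ∀ i, π i (M (ψ j t)) = π i (ψ j (g t)) := by
        intro i
        have hc := hcomm (Em i0 i) (ψ j t)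
        have h2 := congrArg (π i0) hc
        rw [hπE i (M (ψ j t)), hψE i j t] at h2
        rw [h2, hπψ]
        split_ifs with h3 h4 h5
        · subst h3; rfl
        · exact absurd h3.symm h4
        · exact absurd h5.symm h3
        · simp
      calc M (ψ j t) = ∑ i, ψ i (π i (M (ψ j t))) := (hrec _).symm
        _ = ∑ i, ψ i (π i (ψ j (g t))) := by simp only [h1]
        _ = ψ j (g t) := hrec _
    intro x
    have hmapψ : ∀ i s, TensorProduct.map LinearMap.id g (ψ i s) = ψ i (g s) := by
      intro i s; simp [hψ]
    calc M x = M (∑ i, ψ i (π i x)) := by rw [hrec]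
      _ = ∑ i, M (ψ i (π i x)) := by rw [map_sum]
      _ = ∑ i, ψ i (g (π i x)) := by simp only [claim]
      _ = ∑ i, TensorProduct.map LinearMap.id g (ψ i (π i x)) := by simp only [hmapψ]
      _ = TensorProduct.map LinearMap.id g x := by rw [← map_sum, hrec]

/-- Error-detection condition for a subsystem code.  Let `V : A ⊗[ℂ] B → H` be a
linear isometry (inner-product preserving, as expressed on pure tensors by
sesquilinearity, and hence injective), and let `Vd = V†` be its adjoint, which —
`V` being an isometry — is characterized by `Vd ∘ V = id` together with the
self-adjointness of `P = V ∘ Vd` (so `P` is the orthogonal projection onto the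
code subspace `C = range V`).  Let `(e i)` be an orthonormal basis of `C`.
Then for a linear operator `E : H → H` the following are equivalent:
(1) `P ∘ E ∘ P = V ∘ (id_A ⊗ g) ∘ V†` for some linear `g : B → B`;
(2) `⟪e i, (L̄ ∘ E − E ∘ L̄) (e j)⟫ = 0` for every linear `L : A → A` and all
`i, j`, where `L̄ = V ∘ (L ⊗ id_B) ∘ V†`. -/
theorem subsystem_code_error_detection_iff
    {H A B : Type*}
    [NormedAddCommGroup H] [InnerProductSpace ℂ H] [FiniteDimensional ℂ H]
    [NormedAddCommGroup A] [InnerProductSpace ℂ A] [FiniteDimensional ℂ A]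
    [NormedAddCommGroup B] [InnerProductSpace ℂ B] [FiniteDimensional ℂ B]
    (V : A ⊗[ℂ] B →ₗ[ℂ] H)
    (hV : ∀ (a₁ a₂ : A) (b₁ b₂ : B),
      (inner ℂ (V (a₁ ⊗ₜ[ℂ] b₁)) (V (a₂ ⊗ₜ[ℂ] b₂)) : ℂ)
        = (inner ℂ a₁ a₂ : ℂ) * (inner ℂ b₁ b₂ : ℂ))
    (Vd : H →ₗ[ℂ] A ⊗[ℂ] B)
    (hVdV : Vd ∘ₗ V = LinearMap.id)
    (hsa : (V ∘ₗ Vd).IsSymmetric)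
    {I : Type*} (e : I → H) (he : Orthonormal ℂ e)
    (hspan : Submodule.span ℂ (Set.range e) = LinearMap.range V)
    (E : H →ₗ[ℂ] H) :
    (∃ g : B →ₗ[ℂ] B,
        (V ∘ₗ Vd) ∘ₗ E ∘ₗ (V ∘ₗ Vd)
          = V ∘ₗ TensorProduct.map LinearMap.id g ∘ₗ Vd)
      ↔ ∀ L : A →ₗ[ℂ] A, ∀ i j : I,
          (inner ℂ (e i)
            (((V ∘ₗ TensorProduct.map L LinearMap.id ∘ₗ Vd) ∘ₗ E
              - E ∘ₗ (V ∘ₗ TensorProduct.map L LinearMap.id ∘ₗ Vd)) (e j)) : ℂ)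
            = 0 := by
  have hVdV' : ∀ x, Vd (V x) = x := fun x => congrArg (fun f => f x) hVdV
  have hVinj : Function.Injective V := by
    intro x y hxy
    rw [← hVdV' x, ← hVdV' y, hxy]
  set M : A ⊗[ℂ] B →ₗ[ℂ] A ⊗[ℂ] B := Vd ∘ₗ E ∘ₗ V with hM
  have hP : ∀ (x : A ⊗[ℂ] B) (h : H),
      (inner ℂ (V x) h : ℂ) = inner ℂ (V x) (V (Vd h)) := by
    intro x h
    have h1 : V x = (V ∘ₗ Vd) (V x) := by simp [LinearMap.comp_apply, hVdV']
    calc (inner ℂ (V x) h : ℂ) = inner ℂ ((V ∘ₗ Vd) (V x)) h := by rw [← h1]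
      _ = inner ℂ (V x) ((V ∘ₗ Vd) h) := hsa _ _
      _ = inner ℂ (V x) (V (Vd h)) := rfl
  have hrange : ∀ i, ∃ x, V x = e i := by
    intro i
    have h1 : e i ∈ Submodule.span ℂ (Set.range e) :=
      Submodule.subset_span ⟨i, rfl⟩
    rw [hspan] at h1
    exact h1
  constructor
  · rintro ⟨g, hg⟩ L i j
    -- M = map id g
    have hMg : ∀ y, M y = TensorProduct.map LinearMap.id g y := by
      intro y
      have h1 := congrArg (fun f => f (V y)) hg
      simp only [LinearMap.comp_apply, hVdV'] at h1
      exact hVinj h1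
    obtain ⟨x, hx⟩ := hrange i
    obtain ⟨y, hy⟩ := hrange j
    have hcomm : ∀ z, TensorProduct.map L LinearMap.id (TensorProduct.map LinearMap.id g z)
        = TensorProduct.map LinearMap.id g (TensorProduct.map L LinearMap.id z) := by
      intro z
      have h1 : TensorProduct.map L LinearMap.id ∘ₗ TensorProduct.map LinearMap.id g
          = TensorProduct.map LinearMap.id g ∘ₗ TensorProduct.map L LinearMap.id := by
        rw [← TensorProduct.map_comp, ← TensorProduct.map_comp]
        simp
      exact congrArg (fun f => f z) h1
    rw [← hx, ← hy]
    simp only [LinearMap.sub_apply, LinearMap.comp_apply, inner_sub_right, hVdV']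
    rw [hP x (E (V (TensorProduct.map L LinearMap.id y)))]
    have e1 : Vd (E (V y)) = M y := rfl
    have e2 : Vd (E (V (TensorProduct.map L LinearMap.id y)))
        = M (TensorProduct.map L LinearMap.id y) := rfl
    rw [e1, e2, hMg y, hMg (TensorProduct.map L LinearMap.id y), hcomm, sub_self]
  · intro h
    have hXzero : ∀ (L : A →ₗ[ℂ] A) (x y : A ⊗[ℂ] B),
        (inner ℂ (V x) (((V ∘ₗ TensorProduct.map L LinearMap.id ∘ₗ Vd) ∘ₗ E
              - E ∘ₗ (V ∘ₗ TensorProduct.map L LinearMap.id ∘ₗ Vd)) (V y)) : ℂ) = 0 := by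
      intro L x y
      set X := (V ∘ₗ TensorProduct.map L LinearMap.id ∘ₗ Vd) ∘ₗ E
          - E ∘ₗ (V ∘ₗ TensorProduct.map L LinearMap.id ∘ₗ Vd) with hX
      have step1 : ∀ j, ∀ u ∈ LinearMap.range V, (inner ℂ u (X (e j)) : ℂ) = 0 := by
        intro j u hu
        rw [← hspan] at hu
        have hle : Submodule.span ℂ (Set.range e)
            ≤ LinearMap.ker (innerSL ℂ (X (e j))).toLinearMap := by
          rw [Submodule.span_le]
          rintro _ ⟨i, rfl⟩
          simp only [SetLike.mem_coe, LinearMap.mem_ker]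
          show (inner ℂ (X (e j)) (e i) : ℂ) = 0
          rw [← inner_conj_symm, h L i j, map_zero]
        have h0 : (inner ℂ (X (e j)) u : ℂ) = 0 := hle hu
        rw [← inner_conj_symm, h0, map_zero]
      have step2 : ∀ v ∈ LinearMap.range V, (inner ℂ (V x) (X v) : ℂ) = 0 := by
        intro v hv
        rw [← hspan] at hv
        have hle : Submodule.span ℂ (Set.range e)
            ≤ LinearMap.ker ((innerSL ℂ (V x)).toLinearMap ∘ₗ X) := by
          rw [Submodule.span_le]
          rintro _ ⟨i, rfl⟩
          simp only [SetLike.mem_coe, LinearMap.mem_ker, LinearMap.comp_apply]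
          exact step1 i (V x) ⟨x, rfl⟩
        exact hle hv
      exact step2 (V y) ⟨y, rfl⟩
    have hcomm : ∀ L : A →ₗ[ℂ] A, ∀ y,
        TensorProduct.map L LinearMap.id (M y)
          = M (TensorProduct.map L LinearMap.id y) := by
      intro L y
      set w := TensorProduct.map L LinearMap.id (M y)
          - M (TensorProduct.map L LinearMap.id y) with hw
      have h0 : ∀ x, (inner ℂ (V x) (V w) : ℂ) = 0 := by
        intro x
        have h1 := hXzero L x y
        simp only [LinearMap.sub_apply, LinearMap.comp_apply, hVdV', inner_sub_right] at h1
        rw [hP x (E (V (TensorProduct.map L LinearMap.id y)))] at h1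
        have e1 : Vd (E (V y)) = M y := rfl
        have e2 : Vd (E (V (TensorProduct.map L LinearMap.id y)))
            = M (TensorProduct.map L LinearMap.id y) := rfl
        rw [e1, e2, ← inner_sub_right, ← map_sub] at h1
        exact h1
      have h3 : V w = 0 := inner_self_eq_zero.mp (h0 w)
      have h4 : w = 0 := by rw [← hVdV' w, h3, map_zero]
      exact sub_eq_zero.mp h4
    obtain ⟨g, hg⟩ := aux_commutant M hcomm
    refine ⟨g, ?_⟩
    apply LinearMap.ext
    intro u
    simp only [LinearMap.comp_apply]
    rw [← hg (Vd u)]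
    rfl
end

section
/- Let H, A, B be finite-dimensional complex inner product spaces, V : A ⊗[ℂ] B → H a linear isometry, P = V ∘ V†, and E : H → H a linear operator. If there exists a linear map g : B → B with P ∘ E ∘ P = V ∘ (id_A ⊗ g) ∘ V†, then for every linear map L : A → A, writing L̄ = V ∘ (L ⊗ id_B) ∘ V†, one has P ∘ (L̄ ∘ E − E ∘ L̄) ∘ P = 0. -/
open TensorProduct

/-- If an error `E` acts on the code subspace of a subsystem code as
`P ∘ E ∘ P = V ∘ (id_A ⊗ g) ∘ V†` for some linear `g : B → B`, then for every
logical operator `L̄ = V ∘ (L ⊗ id_B) ∘ V†` the projected commutator vanishes: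
`P ∘ (L̄ ∘ E − E ∘ L̄) ∘ P = 0`.  Here `V : A ⊗[ℂ] B → H` is a linear isometry
(inner-product preserving on pure tensors, hence everywhere by
sesquilinearity), and `Vd = V†` is its adjoint, characterized by `Vd ∘ V = id`
and self-adjointness of `P = V ∘ Vd`. -/
theorem subsystem_code_gauge_action_implies_proj_commutator_zero
    {H A B : Type*}
    [NormedAddCommGroup H] [InnerProductSpace ℂ H] [FiniteDimensional ℂ H]
    [NormedAddCommGroup A] [InnerProductSpace ℂ A] [FiniteDimensional ℂ A]
    [NormedAddCommGroup B] [InnerProductSpace ℂ B] [FiniteDimensional ℂ B]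
    (V : A ⊗[ℂ] B →ₗ[ℂ] H)
    (hV : ∀ (a₁ a₂ : A) (b₁ b₂ : B),
      (inner ℂ (V (a₁ ⊗ₜ[ℂ] b₁)) (V (a₂ ⊗ₜ[ℂ] b₂)) : ℂ)
        = (inner ℂ a₁ a₂ : ℂ) * (inner ℂ b₁ b₂ : ℂ))
    (Vd : H →ₗ[ℂ] A ⊗[ℂ] B)
    (hVdV : Vd ∘ₗ V = LinearMap.id)
    (hsa : (V ∘ₗ Vd).IsSymmetric)
    (E : H →ₗ[ℂ] H)
    (hE : ∃ g : B →ₗ[ℂ] B,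
      (V ∘ₗ Vd) ∘ₗ E ∘ₗ (V ∘ₗ Vd)
        = V ∘ₗ TensorProduct.map LinearMap.id g ∘ₗ Vd) :
    ∀ L : A →ₗ[ℂ] A,
      (V ∘ₗ Vd) ∘ₗ
          ((V ∘ₗ TensorProduct.map L LinearMap.id ∘ₗ Vd) ∘ₗ E
            - E ∘ₗ (V ∘ₗ TensorProduct.map L LinearMap.id ∘ₗ Vd)) ∘ₗ
          (V ∘ₗ Vd)
        = 0 := by
  intro L
  obtain ⟨g, hg⟩ := hE
  have hVdV' : ∀ y, Vd (V y) = y := fun y => by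
    simpa using DFunLike.congr_fun hVdV y
  set P : H →ₗ[ℂ] H := V ∘ₗ Vd with hP
  set Lb : H →ₗ[ℂ] H := V ∘ₗ TensorProduct.map L LinearMap.id ∘ₗ Vd with hLb
  have hmaps : (TensorProduct.map L LinearMap.id) ∘ₗ (TensorProduct.map LinearMap.id g)
      = (TensorProduct.map LinearMap.id g) ∘ₗ (TensorProduct.map L LinearMap.id) := by
    rw [← TensorProduct.map_comp, ← TensorProduct.map_comp]; simp
  have hcomm : Lb ∘ₗ (P ∘ₗ E ∘ₗ P) = (P ∘ₗ E ∘ₗ P) ∘ₗ Lb := by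
    rw [hg]
    ext x
    simp only [hLb, LinearMap.comp_apply, hVdV']
    exact congrArg V (by simpa using DFunLike.congr_fun hmaps (Vd x))
  have key : P ∘ₗ (Lb ∘ₗ E - E ∘ₗ Lb) ∘ₗ P
      = Lb ∘ₗ (P ∘ₗ E ∘ₗ P) - (P ∘ₗ E ∘ₗ P) ∘ₗ Lb := by
    ext x
    simp [hLb, hP, map_sub, hVdV']
  rw [key, hcomm, sub_self]
end

section
/- Let H, A, B be finite-dimensional complex inner product spaces, V : A ⊗[ℂ] B → H a linear isometry, P = V ∘ V†, and E : H → H a linear operator. If for every linear map L : A → A the operator P ∘ E ∘ P commutes with L̄ = V ∘ (L ⊗ id_B) ∘ V†, then there exists a linear map g : B → B such that P ∘ E ∘ P = V ∘ (id_A ⊗ g) ∘ V†. -/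
open TensorProduct

/-- If `P ∘ E ∘ P` commutes with every logical operator
`L̄ = V ∘ (L ⊗ id_B) ∘ V†` of a subsystem code, then
`P ∘ E ∘ P = V ∘ (id_A ⊗ g) ∘ V†` for some linear `g : B → B`.  Here
`V : A ⊗[ℂ] B → H` is a linear isometry (inner-product preserving on pure
tensors, hence everywhere by sesquilinearity), and `Vd = V†` is its adjoint,
characterized by `Vd ∘ V = id` and self-adjointness of `P = V ∘ Vd`. -/
theorem subsystem_code_commutant_implies_gauge_action
    {H A B : Type*}
    [NormedAddCommGroup H] [InnerProductSpace ℂ H] [FiniteDimensional ℂ H]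
    [NormedAddCommGroup A] [InnerProductSpace ℂ A] [FiniteDimensional ℂ A]
    [NormedAddCommGroup B] [InnerProductSpace ℂ B] [FiniteDimensional ℂ B]
    (V : A ⊗[ℂ] B →ₗ[ℂ] H)
    (hV : ∀ (a₁ a₂ : A) (b₁ b₂ : B),
      (inner ℂ (V (a₁ ⊗ₜ[ℂ] b₁)) (V (a₂ ⊗ₜ[ℂ] b₂)) : ℂ)
        = (inner ℂ a₁ a₂ : ℂ) * (inner ℂ b₁ b₂ : ℂ))
    (Vd : H →ₗ[ℂ] A ⊗[ℂ] B)
    (hVdV : Vd ∘ₗ V = LinearMap.id)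
    (hsa : (V ∘ₗ Vd).IsSymmetric)
    (E : H →ₗ[ℂ] H)
    (hcomm : ∀ L : A →ₗ[ℂ] A,
      ((V ∘ₗ Vd) ∘ₗ E ∘ₗ (V ∘ₗ Vd)) ∘ₗ
          (V ∘ₗ TensorProduct.map L LinearMap.id ∘ₗ Vd)
        = (V ∘ₗ TensorProduct.map L LinearMap.id ∘ₗ Vd) ∘ₗ
            ((V ∘ₗ Vd) ∘ₗ E ∘ₗ (V ∘ₗ Vd))) :
    ∃ g : B →ₗ[ℂ] B,
      (V ∘ₗ Vd) ∘ₗ E ∘ₗ (V ∘ₗ Vd)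
        = V ∘ₗ TensorProduct.map LinearMap.id g ∘ₗ Vd := by

  classical
  have hVdV' : ∀ x, Vd (V x) = x := fun x => LinearMap.ext_iff.mp hVdV x
  set F : A ⊗[ℂ] B →ₗ[ℂ] A ⊗[ℂ] B := Vd ∘ₗ E ∘ₗ V with hF
  have key : ∀ L : A →ₗ[ℂ] A,
      F ∘ₗ TensorProduct.map L LinearMap.id
        = TensorProduct.map L LinearMap.id ∘ₗ F := by
    intro L
    apply LinearMap.ext; intro x
    have h := LinearMap.ext_iff.mp (hcomm L) (V x)
    simp only [LinearMap.comp_apply, hVdV'] at h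
    have h2 := congrArg Vd h
    simp only [hVdV'] at h2
    simpa [hF, LinearMap.comp_apply] using h2
  suffices hG : ∃ g : B →ₗ[ℂ] B, F = TensorProduct.map LinearMap.id g by
    obtain ⟨g, hg⟩ := hG
    refine ⟨g, ?_⟩
    ext h
    have := LinearMap.ext_iff.mp hg (Vd h)
    simp only [hF, LinearMap.comp_apply] at this ⊢
    rw [this]
  rcases subsingleton_or_nontrivial A with hA | hA
  · refine ⟨0, LinearMap.ext fun x => ?_⟩
    haveI : Subsingleton (A ⊗[ℂ] B) := by
      constructor
      intro u v
      have h0 : ∀ w : A ⊗[ℂ] B, w = 0 := by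
        intro w
        induction w using TensorProduct.induction_on with
        | zero => rfl
        | tmul a b =>
            have : a = (0 : A) := Subsingleton.elim _ _
            rw [this, TensorProduct.zero_tmul]
        | add x y hx hy => rw [hx, hy, add_zero]
      rw [h0 u, h0 v]
    exact Subsingleton.elim _ _
  · obtain ⟨a₀, ha₀⟩ := exists_ne (0 : A)
    have hinner : (inner ℂ a₀ a₀ : ℂ) ≠ 0 := by
      simpa [inner_self_eq_zero] using ha₀
    set φ : A →ₗ[ℂ] ℂ :=
      ((inner ℂ a₀ a₀ : ℂ))⁻¹ • ((innerSL ℂ a₀).toLinearMap) with hφ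
    have hφa₀ : φ a₀ = 1 := by
      simp [hφ]
      exact inv_mul_cancel₀ (by simp [ha₀])
    refine ⟨(TensorProduct.lid ℂ B).toLinearMap ∘ₗ TensorProduct.map φ LinearMap.id
        ∘ₗ F ∘ₗ TensorProduct.mk ℂ A B a₀, ?_⟩
    apply TensorProduct.ext'
    intro a b
    have hLa : TensorProduct.map (φ.smulRight a) LinearMap.id
        = TensorProduct.mk ℂ A B a ∘ₗ (TensorProduct.lid ℂ B).toLinearMap
            ∘ₗ TensorProduct.map φ LinearMap.id := by
      apply TensorProduct.ext'
      intro x y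
      simp only [TensorProduct.map_tmul, LinearMap.smulRight_apply, LinearMap.id_apply,
        LinearMap.comp_apply, TensorProduct.mk_apply, LinearEquiv.coe_coe,
        TensorProduct.lid_tmul]
      exact TensorProduct.smul_tmul _ _ _
    have h1 := LinearMap.ext_iff.mp (key (φ.smulRight a)) (a₀ ⊗ₜ[ℂ] b)
    simp only [LinearMap.comp_apply, TensorProduct.map_tmul,
      LinearMap.smulRight_apply, LinearMap.id_apply, hφa₀, one_smul] at h1
    rw [h1, hLa]
    simp only [LinearMap.comp_apply, TensorProduct.map_tmul, LinearMap.id_apply,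
      TensorProduct.mk_apply, LinearEquiv.coe_coe]
end

section
/- Let H, A, B be finite-dimensional complex inner product spaces, V : A ⊗[ℂ] B → H a linear isometry, P = V ∘ V† the orthogonal projection onto C = range V, (e_i)_{i∈I} an orthonormal basis of C, and (b_k)_{k∈K} a finite family of linear maps A → A that spans End(A) as a ℂ-vector space. For a linear operator E : H → H define the error functional 𝓔_E = Σ_{i,j∈I} Σ_{k∈K} |⟪e_i, (b̄_k ∘ E − E ∘ b̄_k) e_j⟫|², where b̄_k = V ∘ (b_k ⊗ id_B) ∘ V†. Then 𝓔_E = 0 if and only if there exists a linear map g : B → B such that P ∘ E ∘ P = V ∘ (id_A ⊗ g) ∘ V†. -/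
open TensorProduct

lemma commutant_aux {A B : Type*} [AddCommGroup A] [Module ℂ A]
    [AddCommGroup B] [Module ℂ B]
    (F : A ⊗[ℂ] B →ₗ[ℂ] A ⊗[ℂ] B)
    (hF : ∀ L : A →ₗ[ℂ] A,
      (TensorProduct.map L LinearMap.id) ∘ₗ F = F ∘ₗ (TensorProduct.map L LinearMap.id))
    (a₀ : A) (φ₀ : A →ₗ[ℂ] ℂ) (hφ : φ₀ a₀ = 1) :
    ∃ g : B →ₗ[ℂ] B, F = TensorProduct.map LinearMap.id g := by
  set ctr : A ⊗[ℂ] B →ₗ[ℂ] B :=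
    (TensorProduct.lid ℂ B).toLinearMap ∘ₗ TensorProduct.map φ₀ LinearMap.id with hctr
  have key : ∀ (a : A) (y : A ⊗[ℂ] B),
      (TensorProduct.map (φ₀.smulRight a) LinearMap.id) y = a ⊗ₜ[ℂ] ctr y := by
    intro a y
    induction y using TensorProduct.induction_on with
    | zero => simp
    | tmul x c =>
        simp [hctr, TensorProduct.map_tmul, TensorProduct.smul_tmul', tmul_smul]
    | add y z hy hz => simp [hy, hz, tmul_add]
  refine ⟨ctr ∘ₗ F ∘ₗ (TensorProduct.mk ℂ A B a₀), ?_⟩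
  apply TensorProduct.ext'
  intro a c
  have h1 : (TensorProduct.map (φ₀.smulRight a) LinearMap.id) (a₀ ⊗ₜ[ℂ] c) = a ⊗ₜ[ℂ] c := by
    simp [TensorProduct.map_tmul, hφ]
  calc F (a ⊗ₜ[ℂ] c)
      = F ((TensorProduct.map (φ₀.smulRight a) LinearMap.id) (a₀ ⊗ₜ[ℂ] c)) := by rw [h1]
    _ = (TensorProduct.map (φ₀.smulRight a) LinearMap.id) (F (a₀ ⊗ₜ[ℂ] c)) := by
        have := congrArg (fun f => f (a₀ ⊗ₜ[ℂ] c)) (hF (φ₀.smulRight a))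
        exact this.symm
    _ = a ⊗ₜ[ℂ] ctr (F (a₀ ⊗ₜ[ℂ] c)) := key _ _
    _ = _ := by simp [TensorProduct.map_tmul]

/-- Vanishing of the error functional characterizes harmless errors of a
subsystem code.  Let `V : A ⊗[ℂ] B → H` be a linear isometry (inner-product
preserving on pure tensors, hence everywhere by sesquilinearity), with adjoint
`Vd = V†` characterized by `Vd ∘ V = id` and self-adjointness of
`P = V ∘ Vd` (the orthogonal projection onto the code subspace
`C = range V`).  Let `(e i)` be an orthonormal basis of `C`, and `(b k)` a
finite family of linear maps `A → A` spanning `End(A)`.  For a linear operator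
`E : H → H` the error functional
`𝓔_E = Σ_{i,j,k} |⟪e i, (b̄ₖ ∘ E − E ∘ b̄ₖ) (e j)⟫|²`, where
`b̄ₖ = V ∘ (b k ⊗ id_B) ∘ V†`, vanishes iff
`P ∘ E ∘ P = V ∘ (id_A ⊗ g) ∘ V†` for some linear `g : B → B`. -/
theorem subsystem_code_error_functional_eq_zero_iff
    {H A B : Type*}
    [NormedAddCommGroup H] [InnerProductSpace ℂ H] [FiniteDimensional ℂ H]
    [NormedAddCommGroup A] [InnerProductSpace ℂ A] [FiniteDimensional ℂ A]
    [NormedAddCommGroup B] [InnerProductSpace ℂ B] [FiniteDimensional ℂ B]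
    (V : A ⊗[ℂ] B →ₗ[ℂ] H)
    (hV : ∀ (a₁ a₂ : A) (b₁ b₂ : B),
      (inner ℂ (V (a₁ ⊗ₜ[ℂ] b₁)) (V (a₂ ⊗ₜ[ℂ] b₂)) : ℂ)
        = (inner ℂ a₁ a₂ : ℂ) * (inner ℂ b₁ b₂ : ℂ))
    (Vd : H →ₗ[ℂ] A ⊗[ℂ] B)
    (hVdV : Vd ∘ₗ V = LinearMap.id)
    (hsa : (V ∘ₗ Vd).IsSymmetric)
    {I : Type*} [Fintype I] (e : I → H) (he : Orthonormal ℂ e)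
    (hspan : Submodule.span ℂ (Set.range e) = LinearMap.range V)
    {K : Type*} [Fintype K] (b : K → (A →ₗ[ℂ] A))
    (hb : Submodule.span ℂ (Set.range b) = (⊤ : Submodule ℂ (A →ₗ[ℂ] A)))
    (E : H →ₗ[ℂ] H) :
    (∑ i : I, ∑ j : I, ∑ k : K,
        ‖(inner ℂ (e i)
            (((V ∘ₗ TensorProduct.map (b k) LinearMap.id ∘ₗ Vd) ∘ₗ E
              - E ∘ₗ (V ∘ₗ TensorProduct.map (b k) LinearMap.id ∘ₗ Vd))
              (e j)) : ℂ)‖ ^ 2) = 0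
      ↔ ∃ g : B →ₗ[ℂ] B,
          (V ∘ₗ Vd) ∘ₗ E ∘ₗ (V ∘ₗ Vd)
            = V ∘ₗ TensorProduct.map LinearMap.id g ∘ₗ Vd := by
  have hVdV' : ∀ x, Vd (V x) = x := fun x => congrArg (fun f => f x) hVdV
  have hVinj : Function.Injective V := by
    intro x y h
    have := congrArg Vd h
    simpa [hVdV'] using this
  -- cancellation: V ∘ M ∘ Vd determines M
  have cancel : ∀ M N : A ⊗[ℂ] B →ₗ[ℂ] A ⊗[ℂ] B,
      V ∘ₗ M ∘ₗ Vd = V ∘ₗ N ∘ₗ Vd → M = N := by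
    intro M N h
    apply LinearMap.ext; intro x
    apply hVinj
    have := congrArg (fun f => f (V x)) h
    simpa [hVdV'] using this
  set P : H →ₗ[ℂ] H := V ∘ₗ Vd with hP
  have hPV : ∀ x, P (V x) = V x := by intro x; simp [hP, hVdV']
  have hPP : ∀ w, P (P w) = P w := by intro w; simp [hP, hVdV']
  set F : A ⊗[ℂ] B →ₗ[ℂ] A ⊗[ℂ] B := Vd ∘ₗ E ∘ₗ V with hF
  set Bk : K → (H →ₗ[ℂ] H) :=
    fun k => V ∘ₗ TensorProduct.map (b k) LinearMap.id ∘ₗ Vd with hBk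
  set X : K → (H →ₗ[ℂ] H) := fun k => Bk k ∘ₗ E - E ∘ₗ Bk k with hX
  have hPEP : P ∘ₗ E ∘ₗ P = V ∘ₗ F ∘ₗ Vd := by
    apply LinearMap.ext; intro w; simp [hP, hF, hVdV']
  have hPXP : ∀ k, P ∘ₗ X k ∘ₗ P
      = V ∘ₗ (TensorProduct.map (b k) LinearMap.id ∘ₗ F
              - F ∘ₗ TensorProduct.map (b k) LinearMap.id) ∘ₗ Vd := by
    intro k
    apply LinearMap.ext; intro w
    simp [hP, hX, hBk, hF, hVdV', LinearMap.sub_apply, map_sub]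
  have heC : ∀ i, e i ∈ LinearMap.range V := by
    intro i
    rw [← hspan]
    exact Submodule.subset_span ⟨i, rfl⟩
  have hPe : ∀ i, P (e i) = e i := by
    intro i
    obtain ⟨x, hx⟩ := heC i
    rw [← hx]; exact hPV x
  -- inner (e i) (X k (e j)) = inner (e i) ((P ∘ X k ∘ P) (e j))
  have hinner : ∀ k i j, (inner ℂ (e i) (X k (e j)) : ℂ)
      = inner ℂ (e i) ((P ∘ₗ X k ∘ₗ P) (e j)) := by
    intro k i j
    have : (inner ℂ (e i) ((P ∘ₗ X k ∘ₗ P) (e j)) : ℂ)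
        = inner ℂ (P (e i)) (X k (P (e j))) := by
      simp only [LinearMap.comp_apply]
      exact (hsa (e i) (X k (P (e j)))).symm
    rw [this, hPe, hPe]
  constructor
  · intro hsum
    -- each term vanishes
    have hz : ∀ i j k, (inner ℂ (e i) (X k (e j)) : ℂ) = 0 := by
      have h1 := (Finset.sum_eq_zero_iff_of_nonneg (fun i _ => by positivity)).1 hsum
      intro i j k
      have h2 := (Finset.sum_eq_zero_iff_of_nonneg (fun j _ => by positivity)).1
        (h1 i (Finset.mem_univ i)) j (Finset.mem_univ j)
      have h3 := (Finset.sum_eq_zero_iff_of_nonneg (fun k _ => by positivity)).1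
        h2 k (Finset.mem_univ k)
      have := pow_eq_zero_iff (n := 2) (by norm_num) |>.1 h3
      exact norm_eq_zero.1 this
    -- extend to all of range V
    have hz2 : ∀ k, ∀ u ∈ LinearMap.range V, ∀ w ∈ LinearMap.range V,
        (inner ℂ u (X k w) : ℂ) = 0 := by
      intro k u hu w hw
      rw [← hspan] at hu hw
      induction hu using Submodule.span_induction with
      | mem u hu =>
          obtain ⟨i, rfl⟩ := hu
          induction hw using Submodule.span_induction with
          | mem w hw => obtain ⟨j, rfl⟩ := hw; exact hz i j k
          | zero => simp
          | add w₁ w₂ _ _ h1 h2 => simp [map_add, inner_add_right, h1, h2]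
          | smul r w _ h1 => simp [map_smul, inner_smul_right, h1]
      | zero => simp
      | add u₁ u₂ _ _ h1 h2 => simp [inner_add_left, h1, h2]
      | smul r u _ h1 => simp [inner_smul_left, h1]
    -- P X P = 0
    have hPXP0 : ∀ k, P ∘ₗ X k ∘ₗ P = 0 := by
      intro k
      apply LinearMap.ext; intro w
      simp only [LinearMap.comp_apply, LinearMap.zero_apply]
      rw [← inner_self_eq_zero (𝕜 := ℂ)]
      have h1 : (inner ℂ (P (X k (P w))) (P (X k (P w))) : ℂ)
          = inner ℂ (P (P (X k (P w)))) (X k (P w)) :=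
        (hsa (P ((X k) (P w))) ((X k) (P w))).symm
      rw [h1, hPP]
      exact hz2 k _ ⟨Vd (X k (P w)), rfl⟩ _ ⟨Vd w, rfl⟩
    -- commutation
    have hcomm : ∀ L : A →ₗ[ℂ] A,
        TensorProduct.map L LinearMap.id ∘ₗ F = F ∘ₗ TensorProduct.map L LinearMap.id := by
      have hk : ∀ k, TensorProduct.map (b k) LinearMap.id ∘ₗ F
          = F ∘ₗ TensorProduct.map (b k) LinearMap.id := by
        intro k
        have := cancel _ 0 (by rw [← hPXP k, hPXP0 k]; apply LinearMap.ext; intro w; simp)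
        have := sub_eq_zero.1 this
        exact this
      intro L
      have hL : L ∈ Submodule.span ℂ (Set.range b) := by rw [hb]; trivial
      induction hL using Submodule.span_induction with
      | mem L hL => obtain ⟨k, rfl⟩ := hL; exact hk k
      | zero => apply LinearMap.ext; intro w; simp
      | add L₁ L₂ _ _ h1 h2 =>
          rw [map_add_left, LinearMap.add_comp, LinearMap.comp_add, h1, h2]
      | smul r L _ h1 =>
          rw [map_smul_left, LinearMap.smul_comp, LinearMap.comp_smul, h1]
    -- existence of g
    rcases subsingleton_or_nontrivial A with hA | hA
    · have hsub : ∀ y : A ⊗[ℂ] B, y = 0 := by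
        intro y
        induction y using TensorProduct.induction_on with
        | zero => rfl
        | tmul a c => rw [Subsingleton.elim a 0, TensorProduct.zero_tmul]
        | add y z hy hz => rw [hy, hz, add_zero]
      have hF0 : F = TensorProduct.map LinearMap.id (0 : B →ₗ[ℂ] B) := by
        apply LinearMap.ext; intro x
        rw [hsub x, hsub (F 0), hsub (TensorProduct.map LinearMap.id (0 : B →ₗ[ℂ] B) 0)]
      exact ⟨0, by rw [hPEP, hF0]⟩
    · obtain ⟨a₀, ha₀⟩ := exists_ne (0 : A)
      set φ₀ : A →ₗ[ℂ] ℂ :=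
        ((inner ℂ a₀ a₀ : ℂ))⁻¹ • (innerSL ℂ a₀).toLinearMap with hφ₀
      have hφ : φ₀ a₀ = 1 := by
        simp only [hφ₀, LinearMap.smul_apply, ContinuousLinearMap.coe_coe, innerSL_apply_apply,
          smul_eq_mul]
        rw [inv_mul_cancel₀]
        exact fun h => ha₀ ((inner_self_eq_zero (𝕜 := ℂ)).1 h)
      obtain ⟨g, hg⟩ := commutant_aux F hcomm a₀ φ₀ hφ
      exact ⟨g, by rw [hPEP, hg]⟩
  · rintro ⟨g, hg⟩
    have hFg : F = TensorProduct.map LinearMap.id g := by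
      apply cancel
      rw [← hPEP]; exact hg
    have hPXP0 : ∀ k, P ∘ₗ X k ∘ₗ P = 0 := by
      intro k
      rw [hPXP k, hFg]
      have : TensorProduct.map (b k) LinearMap.id ∘ₗ TensorProduct.map LinearMap.id g
          = TensorProduct.map LinearMap.id g ∘ₗ TensorProduct.map (b k) LinearMap.id := by
        rw [← TensorProduct.map_comp, ← TensorProduct.map_comp]
        simp
      rw [this]
      apply LinearMap.ext; intro w; simp
    apply Finset.sum_eq_zero; intro i _
    apply Finset.sum_eq_zero; intro j _
    apply Finset.sum_eq_zero; intro k _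
    rw [show ((V ∘ₗ TensorProduct.map (b k) LinearMap.id ∘ₗ Vd) ∘ₗ E
              - E ∘ₗ (V ∘ₗ TensorProduct.map (b k) LinearMap.id ∘ₗ Vd)) = X k from rfl]
    rw [hinner k i j, hPXP0 k]
    simp
end
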